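/- Let V be a countably infinite set and let R be a symmetric, irreflexive binary relation on V such that (V, R) is a random graph, i.e., for every pair of finite disjoint sets A, B ⊆ V there exists v ∈ V with v R x for all x ∈ A and ¬(v R y) for all y ∈ B. Then the automorphism group Aut(V, R) can be decomposed into the union of a conjugacy-invariant Haar null set and a meager set: there exist sets H, M ⊆ Aut(V, R) with Aut(V, R) = H ∪ M, where H is Haar null and invariant under conjugacy, and M is meager. -/

import Mathlib

open MeasureTheory

/-- The topology of pointwise convergence on `Equiv.Perm V` (`V` discrete): the topology
induced by the embedding `σ ↦ (σ, σ⁻¹)` into `(V → V) × (V → V)`. -/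
instance instPermTop {V : Type*} [TopologicalSpace V] : TopologicalSpace (Equiv.Perm V) :=
  TopologicalSpace.induced (fun σ : Equiv.Perm V => ((⇑σ, ⇑σ⁻¹) : (V → V) × (V → V)))
    inferInstance

noncomputable instance instPermMeas {V : Type*} [TopologicalSpace V] :
    MeasurableSpace (Equiv.Perm V) := borel _

instance instPermBorel {V : Type*} [TopologicalSpace V] : BorelSpace (Equiv.Perm V) := ⟨rfl⟩

/-- A set `A` in a topological group is *Haar null* if there are a Borel set `B ⊇ A` and a
Borel probability measure `μ` such that `μ (g • B • h) = 0` for all `g, h`. -/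
def HaarNull {G : Type*} [Group G] [MeasurableSpace G] (A : Set G) : Prop :=
  ∃ B : Set G, A ⊆ B ∧ MeasurableSet B ∧
    ∃ μ : Measure G, IsProbabilityMeasure μ ∧
      ∀ g h : G, μ ((fun b => g * b * h) '' B) = 0

/-- The orbit `{gᵏ(a) : k ∈ ℤ}` of a point `a` under a permutation `g`. -/
def orbitZ {α : Type*} (g : Equiv.Perm α) (a : α) : Set α :=
  {b | ∃ k : ℤ, (g ^ k) a = b}

/-- The automorphism group of the graph `(V, R)`, as a (closed) subgroup of `S∞`. -/
def graphAut {V : Type*} (R : V → V → Prop) : Subgroup (Equiv.Perm V) where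
  carrier := {f | ∀ x y, R x y ↔ R (f x) (f y)}
  one_mem' := by intro x y; rfl
  mul_mem' := by
    intro f g hf hg x y
    simpa [Equiv.Perm.mul_apply] using (hg x y).trans (hf (g x) (g y))
  inv_mem' := by
    intro f hf x y
    simpa using (hf (f⁻¹ x) (f⁻¹ y)).symm


theorem Equiv.Perm.apply_inv_self {α : Type*} (f : Equiv.Perm α) (x : α) : f (f⁻¹ x) = x :=
  f.apply_symm_apply x

theorem Equiv.Perm.inv_apply_self {α : Type*} (f : Equiv.Perm α) (x : α) : f⁻¹ (f x) = x :=
  f.symm_apply_apply x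

namespace RG15

variable {V : Type*} (R : V → V → Prop)

/-- A finite partial isomorphism, given as a list of pairs. -/
def Good (L : List (V × V)) : Prop :=
  ∀ p ∈ L, ∀ q ∈ L, (p.1 = q.1 ↔ p.2 = q.2) ∧ (R p.1 q.1 ↔ R p.2 q.2)

variable {V : Type*}

def doms (L : List (V × V)) : Set V := {x | ∃ p ∈ L, p.1 = x}
def rans (L : List (V × V)) : Set V := {y | ∃ p ∈ L, p.2 = y}

theorem good_mono {R : V → V → Prop} {L M : List (V × V)} (h : Good R L)
    (hsub : ∀ p ∈ M, p ∈ L) : Good R M := fun p hp q hq => h p (hsub p hp) q (hsub q hq)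

theorem doms_finite (L : List (V × V)) : (doms L).Finite := by
  have : doms L ⊆ Prod.fst '' {p | p ∈ L} := by
    rintro x ⟨p, hp, rfl⟩; exact ⟨p, hp, rfl⟩
  exact (L.finite_toSet.image _).subset this

theorem rans_finite (L : List (V × V)) : (rans L).Finite := by
  have : rans L ⊆ Prod.snd '' {p | p ∈ L} := by
    rintro x ⟨p, hp, rfl⟩; exact ⟨p, hp, rfl⟩
  exact (L.finite_toSet.image _).subset this

/-- Hypotheses packaged. -/
structure RandHyp (R : V → V → Prop) : Prop where
  hsym : ∀ x y, R x y → R y x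
  hirr : ∀ x, ¬ R x x
  hrand : ∀ A B : Set V, A.Finite → B.Finite → Disjoint A B →
      ∃ v : V, (∀ x ∈ A, R v x) ∧ (∀ y ∈ B, ¬ R v y)

variable {R : V → V → Prop}

/-- key extension property: fresh vertex with arbitrary prescribed adjacency pattern. -/
theorem RandHyp.fresh (H : RandHyp R) (S : Set V) (hS : S.Finite) (N : Set V) (hN : N ⊆ S) :
    ∃ z, z ∉ S ∧ ∀ x ∈ S, (R z x ↔ x ∈ N) := by
  obtain ⟨c, hc, -⟩ := H.hrand S ∅ hS Set.finite_empty (Set.disjoint_empty S)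
  have hcS : c ∉ S := fun h => H.hirr c (hc c h)
  obtain ⟨z, hz1, hz2⟩ := H.hrand N ((S \ N) ∪ {c})
    (hS.subset hN) (hS.diff.union (Set.finite_singleton c))
    (by
      refine Set.disjoint_union_right.2 ⟨?_, ?_⟩
      · exact Set.disjoint_sdiff_right
      · exact Set.disjoint_singleton_right.2 (fun h => hcS (hN h)))
  have hzS : z ∉ S := by
    intro hzS
    have h1 : R c z := hc z hzS
    exact hz2 c (Or.inr rfl) (H.hsym c z h1)
  refine ⟨z, hzS, fun x hx => ⟨?_, fun hxN => hz1 x hxN⟩⟩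
  intro hR
  by_contra hxN
  exact hz2 x (Or.inl ⟨hx, hxN⟩) hR

end RG15
-- Part 2: candidates and the recursion engine
namespace RG15

variable {V : Type*} {R : V → V → Prop}

/-- Candidate images for a forward extension at `a`. -/
def cand (R : V → V → Prop) (L : List (V × V)) (a : V) : Set V :=
  {z | z ∉ doms L ∧ z ∉ rans L ∧ ∀ p ∈ L, (R a p.1 ↔ R z p.2)}

/-- Candidate preimages for a backward extension at `b`. -/
def candB (R : V → V → Prop) (L : List (V × V)) (b : V) : Set V :=
  {u | u ∉ doms L ∧ u ∉ rans L ∧ ∀ p ∈ L, (R u p.1 ↔ R b p.2)}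

theorem infinite_of_forall_finite_exists {s : Set V}
    (h : ∀ F : Set V, F.Finite → ∃ z, z ∈ s ∧ z ∉ F) : s.Infinite := by
  intro hfin
  obtain ⟨z, hz1, hz2⟩ := h s hfin
  exact hz2 hz1

theorem cand_infinite (H : RandHyp R) {L : List (V × V)} (hG : Good R L) (a : V) :
    (cand R L a).Infinite := by
  apply infinite_of_forall_finite_exists
  intro F hF
  set S : Set V := (doms L ∪ rans L) ∪ F with hSdef
  have hSfin : S.Finite := ((doms_finite L).union (rans_finite L)).union hF
  set N : Set V := {y | ∃ p ∈ L, p.2 = y ∧ R a p.1} with hNdef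
  have hNS : N ⊆ S := by
    rintro y ⟨p, hp, rfl, -⟩; exact Or.inl (Or.inr ⟨p, hp, rfl⟩)
  obtain ⟨z, hzS, hz⟩ := H.fresh S hSfin N hNS
  refine ⟨z, ⟨?_, ?_, ?_⟩, fun h => hzS (Or.inr h)⟩
  · exact fun h => hzS (Or.inl (Or.inl h))
  · exact fun h => hzS (Or.inl (Or.inr h))
  · intro p hp
    have hpS : p.2 ∈ S := Or.inl (Or.inr ⟨p, hp, rfl⟩)
    rw [hz p.2 hpS]
    constructor
    · intro hr; exact ⟨p, hp, rfl, hr⟩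
    · rintro ⟨q, hq, hq2, hq1⟩
      have h1 : q.1 = p.1 := (hG q hq p hp).1.mpr hq2
      rwa [h1] at hq1

theorem candB_infinite (H : RandHyp R) {L : List (V × V)} (hG : Good R L) (b : V) :
    (candB R L b).Infinite := by
  apply infinite_of_forall_finite_exists
  intro F hF
  set S : Set V := (doms L ∪ rans L) ∪ F with hSdef
  have hSfin : S.Finite := ((doms_finite L).union (rans_finite L)).union hF
  set N : Set V := {x | ∃ p ∈ L, p.1 = x ∧ R b p.2} with hNdef
  have hNS : N ⊆ S := by
    rintro x ⟨p, hp, rfl, -⟩; exact Or.inl (Or.inl ⟨p, hp, rfl⟩)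
  obtain ⟨z, hzS, hz⟩ := H.fresh S hSfin N hNS
  refine ⟨z, ⟨?_, ?_, ?_⟩, fun h => hzS (Or.inr h)⟩
  · exact fun h => hzS (Or.inl (Or.inl h))
  · exact fun h => hzS (Or.inl (Or.inr h))
  · intro p hp
    have hpS : p.1 ∈ S := Or.inl (Or.inl ⟨p, hp, rfl⟩)
    rw [hz p.1 hpS]
    constructor
    · rintro ⟨q, hq, hq1, hq2⟩
      have h2 : q.2 = p.2 := (hG q hq p hp).1.mp hq1
      rwa [h2] at hq2
    · intro hr; exact ⟨p, hp, rfl, hr⟩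

open Classical in
/-- The `i`-th candidate image (an injective enumeration of `cand R L a`). -/
noncomputable def candFun (R : V → V → Prop) (L : List (V × V)) (a : V) (i : ℕ) : V :=
  if h : (cand R L a).Infinite then (Set.Infinite.natEmbedding (cand R L a) h i).1 else a

open Classical in
noncomputable def candFunB (R : V → V → Prop) (L : List (V × V)) (b : V) (i : ℕ) : V :=
  if h : (candB R L b).Infinite then (Set.Infinite.natEmbedding (candB R L b) h i).1 else b

theorem candFun_mem (H : RandHyp R) {L : List (V × V)} (hG : Good R L) (a : V) (i : ℕ) :
    candFun R L a i ∈ cand R L a := by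
  have h := cand_infinite H hG a
  rw [candFun, dif_pos h]
  exact (Set.Infinite.natEmbedding (cand R L a) h i).2

theorem candFunB_mem (H : RandHyp R) {L : List (V × V)} (hG : Good R L) (b : V) (i : ℕ) :
    candFunB R L b i ∈ candB R L b := by
  have h := candB_infinite H hG b
  rw [candFunB, dif_pos h]
  exact (Set.Infinite.natEmbedding (candB R L b) h i).2

theorem candFun_inj (H : RandHyp R) {L : List (V × V)} (hG : Good R L) (a : V) :
    Function.Injective (candFun R L a) := by
  have h := cand_infinite H hG a
  intro i j hij
  simp only [candFun, dif_pos h] at hij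
  exact (Set.Infinite.natEmbedding (cand R L a) h).injective (Subtype.ext hij)

theorem candFunB_inj (H : RandHyp R) {L : List (V × V)} (hG : Good R L) (b : V) :
    Function.Injective (candFunB R L b) := by
  have h := candB_infinite H hG b
  intro i j hij
  simp only [candFunB, dif_pos h] at hij
  exact (Set.Infinite.natEmbedding (candB R L b) h).injective (Subtype.ext hij)

theorem good_cons_fwd (H : RandHyp R) {L : List (V × V)} (hG : Good R L) {a z : V}
    (ha : a ∉ doms L) (hz : z ∈ cand R L a) : Good R ((a, z) :: L) := by
  obtain ⟨hz1, hz2, hz3⟩ := hz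
  intro p hp q hq
  rcases List.mem_cons.1 hp with rfl | hp <;> rcases List.mem_cons.1 hq with rfl | hq
  · exact ⟨by simp, ⟨fun h => absurd h (H.hirr _), fun h => absurd h (H.hirr _)⟩⟩
  · constructor
    · constructor
      · intro h; exact absurd ⟨q, hq, h.symm⟩ ha
      · intro h; exact absurd ⟨q, hq, h.symm⟩ hz2
    · exact hz3 q hq
  · constructor
    · constructor
      · intro h; exact absurd ⟨p, hp, h⟩ ha
      · intro h; exact absurd ⟨p, hp, h⟩ hz2
    · constructor
      · intro h; exact H.hsym _ _ ((hz3 p hp).1 (H.hsym _ _ h))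
      · intro h; exact H.hsym _ _ ((hz3 p hp).2 (H.hsym _ _ h))
  · exact hG p hp q hq

theorem good_cons_bwd (H : RandHyp R) {L : List (V × V)} (hG : Good R L) {u b : V}
    (hb : b ∉ rans L) (hu : u ∈ candB R L b) : Good R ((u, b) :: L) := by
  obtain ⟨hu1, hu2, hu3⟩ := hu
  intro p hp q hq
  rcases List.mem_cons.1 hp with rfl | hp <;> rcases List.mem_cons.1 hq with rfl | hq
  · exact ⟨by simp, ⟨fun h => absurd h (H.hirr _), fun h => absurd h (H.hirr _)⟩⟩
  · constructor
    · constructor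
      · intro h; exact absurd ⟨q, hq, h.symm⟩ hu1
      · intro h; exact absurd ⟨q, hq, h.symm⟩ hb
    · exact hu3 q hq
  · constructor
    · constructor
      · intro h; exact absurd ⟨p, hp, h⟩ hu1
      · intro h; exact absurd ⟨p, hp, h⟩ hb
    · constructor
      · intro h; exact H.hsym _ _ ((hu3 p hp).1 (H.hsym _ _ h))
      · intro h; exact H.hsym _ _ ((hu3 p hp).2 (H.hsym _ _ h))
  · exact hG p hp q hq

end RG15
-- Part 3: the recursion engine and the limit permutation
namespace RG15

variable {V : Type*} {R : V → V → Prop}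

open Classical in
/-- One step of the (randomized) back-and-forth construction. -/
noncomputable def step (R : V → V → Prop) (e : ℕ ≃ V) (k : ℕ) (c : ℕ)
    (L : List (V × V)) : List (V × V) :=
  if k % 2 = 0 then
    if e (k / 2) ∈ doms L then L else (e (k / 2), candFun R L (e (k / 2)) c) :: L
  else
    if e (k / 2) ∈ rans L then L else (candFunB R L (e (k / 2)) c, e (k / 2)) :: L

/-- The increasing sequence of partial isomorphisms determined by `ω`. -/
noncomputable def qs (R : V → V → Prop) (e : ℕ ≃ V) (q₀ : List (V × V)) (ω : ℕ → ℕ) :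
    ℕ → List (V × V)
  | 0 => q₀
  | (k+1) => step R e k (ω k) (qs R e q₀ ω k)

theorem qs_congr (e : ℕ ≃ V) (q₀ : List (V × V)) {ω ω' : ℕ → ℕ} :
    ∀ k, (∀ i < k, ω i = ω' i) → qs R e q₀ ω k = qs R e q₀ ω' k
  | 0, _ => rfl
  | (k+1), h => by
    have ih := qs_congr e q₀ k (fun i hi => h i (Nat.lt_succ_of_lt hi))
    simp only [qs, ih, h k (Nat.lt_succ_self k)]

/-- Structure of one step: no-op, or a cons with fresh first/second coordinates,
preserving `Good`. -/
theorem step_cases (H : RandHyp R) (e : ℕ ≃ V) (k c : ℕ) {L : List (V × V)}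
    (hG : Good R L) :
    (step R e k c L = L) ∨
      (∃ pr : V × V, step R e k c L = pr :: L ∧ pr.1 ∉ doms L ∧ pr.2 ∉ rans L ∧
        Good R (step R e k c L)) := by
  by_cases hk : k % 2 = 0
  · by_cases hd : e (k / 2) ∈ doms L
    · left; rw [step, if_pos hk, if_pos hd]
    · have hs : step R e k c L = (e (k / 2), candFun R L (e (k / 2)) c) :: L := by
        rw [step, if_pos hk, if_neg hd]
      have hc := candFun_mem H hG (e (k / 2)) c
      exact Or.inr ⟨_, hs, hd, hc.2.1, by rw [hs]; exact good_cons_fwd H hG hd hc⟩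
  · by_cases hr : e (k / 2) ∈ rans L
    · left; rw [step, if_neg hk, if_pos hr]
    · have hs : step R e k c L = (candFunB R L (e (k / 2)) c, e (k / 2)) :: L := by
        rw [step, if_neg hk, if_neg hr]
      have hc := candFunB_mem H hG (e (k / 2)) c
      exact Or.inr ⟨_, hs, hc.1, hr, by rw [hs]; exact good_cons_bwd H hG hr hc⟩

theorem good_step (H : RandHyp R) (e : ℕ ≃ V) (k c : ℕ) {L : List (V × V)}
    (hG : Good R L) : Good R (step R e k c L) := by
  rcases step_cases H e k c hG with h | ⟨pr, h, _, _, hg⟩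
  · rwa [h]
  · exact hg

theorem good_qs (H : RandHyp R) (e : ℕ ≃ V) {q₀ : List (V × V)} (hG0 : Good R q₀)
    (ω : ℕ → ℕ) : ∀ k, Good R (qs R e q₀ ω k)
  | 0 => hG0
  | (k+1) => good_step H e k (ω k) (good_qs H e hG0 ω k)

theorem qs_mem_mono (H : RandHyp R) (e : ℕ ≃ V) {q₀ : List (V × V)} (hG0 : Good R q₀)
    (ω : ℕ → ℕ) {k m : ℕ} (hkm : k ≤ m) {p : V × V} (hp : p ∈ qs R e q₀ ω k) :
    p ∈ qs R e q₀ ω m := by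
  induction m with
  | zero => rwa [Nat.le_zero.1 hkm] at hp
  | succ m ih =>
    rcases Nat.le_succ_iff.1 hkm with h | rfl
    · have hm := ih h
      rcases step_cases H e m (ω m) (good_qs H e hG0 ω m) with hs | ⟨pr, hs, _⟩
      · show p ∈ step R e m (ω m) (qs R e q₀ ω m); rwa [hs]
      · show p ∈ step R e m (ω m) (qs R e q₀ ω m); rw [hs]; exact List.mem_cons_of_mem _ hm
    · exact hp

/-- Partial application. -/
noncomputable def papp : List (V × V) → V → V
  | [], x => x
  | (p :: L), x => open Classical in if p.1 = x then p.2 else papp L x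

noncomputable def ppre : List (V × V) → V → V
  | [], y => y
  | (p :: L), y => open Classical in if p.2 = y then p.1 else ppre L y

theorem papp_eq_of_mem {L : List (V × V)} (hG : Good R L) {x y : V}
    (h : (x, y) ∈ L) : papp L x = y := by
  induction L with
  | nil => simp at h
  | cons p L ih =>
    rw [papp]
    by_cases hp : p.1 = x
    · rw [if_pos hp]
      exact (hG p (List.mem_cons_self) (x, y) h).1.mp hp
    · rw [if_neg hp]
      rcases List.mem_cons.1 h with rfl | h'
      · exact absurd rfl hp
      · exact ih (good_mono hG (fun q hq => List.mem_cons_of_mem _ hq)) h'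

theorem ppre_eq_of_mem {L : List (V × V)} (hG : Good R L) {x y : V}
    (h : (x, y) ∈ L) : ppre L y = x := by
  induction L with
  | nil => simp at h
  | cons p L ih =>
    rw [ppre]
    by_cases hp : p.2 = y
    · rw [if_pos hp]
      exact (hG p (List.mem_cons_self) (x, y) h).1.mpr hp
    · rw [if_neg hp]
      rcases List.mem_cons.1 h with rfl | h'
      · exact absurd rfl hp
      · exact ih (good_mono hG (fun q hq => List.mem_cons_of_mem _ hq)) h'

theorem mem_papp {L : List (V × V)} {x : V} (h : x ∈ doms L) : (x, papp L x) ∈ L := by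
  induction L with
  | nil => obtain ⟨p, hp, -⟩ := h; simp at hp
  | cons p L ih =>
    rw [papp]
    by_cases hp : p.1 = x
    · rw [if_pos hp]
      rw [← hp]; exact List.mem_cons_self
    · rw [if_neg hp]
      obtain ⟨q, hq, hqx⟩ := h
      rcases List.mem_cons.1 hq with rfl | hq'
      · exact absurd hqx hp
      · exact List.mem_cons_of_mem _ (ih ⟨q, hq', hqx⟩)

theorem mem_ppre {L : List (V × V)} {y : V} (h : y ∈ rans L) : (ppre L y, y) ∈ L := by
  induction L with
  | nil => obtain ⟨p, hp, -⟩ := h; simp at hp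
  | cons p L ih =>
    rw [ppre]
    by_cases hp : p.2 = y
    · rw [if_pos hp]
      rw [← hp]; exact List.mem_cons_self
    · rw [if_neg hp]
      obtain ⟨q, hq, hqy⟩ := h
      rcases List.mem_cons.1 hq with rfl | hq'
      · exact absurd hqy hp
      · exact List.mem_cons_of_mem _ (ih ⟨q, hq', hqy⟩)

theorem doms_mono (H : RandHyp R) (e : ℕ ≃ V) {q₀ : List (V × V)} (hG0 : Good R q₀)
    (ω : ℕ → ℕ) {k m : ℕ} (hkm : k ≤ m) {x : V} (hx : x ∈ doms (qs R e q₀ ω k)) :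
    x ∈ doms (qs R e q₀ ω m) := by
  obtain ⟨p, hp, hpx⟩ := hx
  exact ⟨p, qs_mem_mono H e hG0 ω hkm hp, hpx⟩

theorem rans_mono (H : RandHyp R) (e : ℕ ≃ V) {q₀ : List (V × V)} (hG0 : Good R q₀)
    (ω : ℕ → ℕ) {k m : ℕ} (hkm : k ≤ m) {y : V} (hy : y ∈ rans (qs R e q₀ ω k)) :
    y ∈ rans (qs R e q₀ ω m) := by
  obtain ⟨p, hp, hpy⟩ := hy
  exact ⟨p, qs_mem_mono H e hG0 ω hkm hp, hpy⟩

theorem papp_stable (H : RandHyp R) (e : ℕ ≃ V) {q₀ : List (V × V)} (hG0 : Good R q₀)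
    (ω : ℕ → ℕ) {k m : ℕ} (hkm : k ≤ m) {x : V} (hx : x ∈ doms (qs R e q₀ ω k)) :
    papp (qs R e q₀ ω m) x = papp (qs R e q₀ ω k) x := by
  induction m with
  | zero => rw [Nat.le_zero.1 hkm]
  | succ m ih =>
    rcases Nat.le_succ_iff.1 hkm with h | rfl
    · rw [← ih h]
      rcases step_cases H e m (ω m) (good_qs H e hG0 ω m) with hs | ⟨pr, hs, hd, -⟩
      · show papp (step R e m (ω m) (qs R e q₀ ω m)) x = _; rw [hs]
      · show papp (step R e m (ω m) (qs R e q₀ ω m)) x = _; rw [hs, papp]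
        have : pr.1 ≠ x := fun hh => hd (hh ▸ doms_mono H e hG0 ω h hx)
        rw [if_neg this]
    · rfl

theorem ppre_stable (H : RandHyp R) (e : ℕ ≃ V) {q₀ : List (V × V)} (hG0 : Good R q₀)
    (ω : ℕ → ℕ) {k m : ℕ} (hkm : k ≤ m) {y : V} (hy : y ∈ rans (qs R e q₀ ω k)) :
    ppre (qs R e q₀ ω m) y = ppre (qs R e q₀ ω k) y := by
  induction m with
  | zero => rw [Nat.le_zero.1 hkm]
  | succ m ih =>
    rcases Nat.le_succ_iff.1 hkm with h | rfl
    · rw [← ih h]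
      rcases step_cases H e m (ω m) (good_qs H e hG0 ω m) with hs | ⟨pr, hs, -, hr, -⟩
      · show ppre (step R e m (ω m) (qs R e q₀ ω m)) y = _; rw [hs]
      · show ppre (step R e m (ω m) (qs R e q₀ ω m)) y = _; rw [hs, ppre]
        have : pr.2 ≠ y := fun hh => hr (hh ▸ rans_mono H e hG0 ω h hy)
        rw [if_neg this]
    · rfl

theorem cover_dom (e : ℕ ≃ V) (q₀ : List (V × V)) (ω : ℕ → ℕ) (x : V) :
    x ∈ doms (qs R e q₀ ω (2 * e.symm x + 1)) := by
  have hk : (2 * (e.symm x)) % 2 = 0 := by omega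
  have hk2 : (2 * (e.symm x)) / 2 = e.symm x := by omega
  show x ∈ doms (step R e (2 * e.symm x) (ω _) (qs R e q₀ ω (2 * e.symm x)))
  rw [step, if_pos hk, hk2, Equiv.apply_symm_apply]
  by_cases hd : x ∈ doms (qs R e q₀ ω (2 * e.symm x))
  · rwa [if_pos hd]
  · rw [if_neg hd]
    exact ⟨_, List.mem_cons_self, rfl⟩

theorem cover_ran (e : ℕ ≃ V) (q₀ : List (V × V)) (ω : ℕ → ℕ) (y : V) :
    y ∈ rans (qs R e q₀ ω (2 * e.symm y + 2)) := by
  have hk : (2 * (e.symm y) + 1) % 2 ≠ 0 := by omega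
  have hk2 : (2 * (e.symm y) + 1) / 2 = e.symm y := by omega
  show y ∈ rans (step R e (2 * e.symm y + 1) (ω _) (qs R e q₀ ω (2 * e.symm y + 1)))
  rw [step, if_neg hk, hk2, Equiv.apply_symm_apply]
  by_cases hr : y ∈ rans (qs R e q₀ ω (2 * e.symm y + 1))
  · rwa [if_pos hr]
  · rw [if_neg hr]
    exact ⟨_, List.mem_cons_self, rfl⟩

end RG15
-- Part 4: the limit permutation
namespace RG15

variable {V : Type*} {R : V → V → Prop}

noncomputable def Ffun (R : V → V → Prop) (e : ℕ ≃ V) (q₀ : List (V × V)) (ω : ℕ → ℕ)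
    (x : V) : V := papp (qs R e q₀ ω (2 * e.symm x + 1)) x

noncomputable def Gfun (R : V → V → Prop) (e : ℕ ≃ V) (q₀ : List (V × V)) (ω : ℕ → ℕ)
    (y : V) : V := ppre (qs R e q₀ ω (2 * e.symm y + 2)) y

theorem Ffun_pair (H : RandHyp R) (e : ℕ ≃ V) {q₀ : List (V × V)} (hG0 : Good R q₀)
    (ω : ℕ → ℕ) (x : V) : (x, Ffun R e q₀ ω x) ∈ qs R e q₀ ω (2 * e.symm x + 1) :=
  mem_papp (cover_dom e q₀ ω x)

theorem Gfun_pair (H : RandHyp R) (e : ℕ ≃ V) {q₀ : List (V × V)} (hG0 : Good R q₀)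
    (ω : ℕ → ℕ) (y : V) : (Gfun R e q₀ ω y, y) ∈ qs R e q₀ ω (2 * e.symm y + 2) :=
  mem_ppre (cover_ran e q₀ ω y)

theorem pair_Ffun (H : RandHyp R) (e : ℕ ≃ V) {q₀ : List (V × V)} (hG0 : Good R q₀)
    (ω : ℕ → ℕ) {k : ℕ} {x y : V} (h : (x, y) ∈ qs R e q₀ ω k) :
    Ffun R e q₀ ω x = y := by
  set K := max k (2 * e.symm x + 1) with hK
  have h1 : (x, y) ∈ qs R e q₀ ω K := qs_mem_mono H e hG0 ω (le_max_left _ _) h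
  have h2 : papp (qs R e q₀ ω K) x = y := papp_eq_of_mem (good_qs H e hG0 ω K) h1
  rw [Ffun, ← papp_stable H e hG0 ω (le_max_right k _) (cover_dom e q₀ ω x), h2]

theorem pair_Gfun (H : RandHyp R) (e : ℕ ≃ V) {q₀ : List (V × V)} (hG0 : Good R q₀)
    (ω : ℕ → ℕ) {k : ℕ} {x y : V} (h : (x, y) ∈ qs R e q₀ ω k) :
    Gfun R e q₀ ω y = x := by
  set K := max k (2 * e.symm y + 2) with hK
  have h1 : (x, y) ∈ qs R e q₀ ω K := qs_mem_mono H e hG0 ω (le_max_left _ _) h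
  have h2 : ppre (qs R e q₀ ω K) y = x := ppre_eq_of_mem (good_qs H e hG0 ω K) h1
  rw [Gfun, ← ppre_stable H e hG0 ω (le_max_right k _) (cover_ran e q₀ ω y), h2]

/-- The limit permutation. -/
noncomputable def Phi (R : V → V → Prop) (H : RandHyp R) (e : ℕ ≃ V) (q₀ : List (V × V))
    (hG0 : Good R q₀) (ω : ℕ → ℕ) : Equiv.Perm V where
  toFun := Ffun R e q₀ ω
  invFun := Gfun R e q₀ ω
  left_inv := fun x => pair_Gfun H e hG0 ω (Ffun_pair H e hG0 ω x)
  right_inv := fun y => pair_Ffun H e hG0 ω (Gfun_pair H e hG0 ω y)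

theorem Phi_aut (H : RandHyp R) (e : ℕ ≃ V) {q₀ : List (V × V)} (hG0 : Good R q₀)
    (ω : ℕ → ℕ) (x y : V) :
    R x y ↔ R (Phi R H e q₀ hG0 ω x) (Phi R H e q₀ hG0 ω y) := by
  set K := max (2 * e.symm x + 1) (2 * e.symm y + 1) with hK
  have h1 : (x, Ffun R e q₀ ω x) ∈ qs R e q₀ ω K :=
    qs_mem_mono H e hG0 ω (le_max_left _ _) (Ffun_pair H e hG0 ω x)
  have h2 : (y, Ffun R e q₀ ω y) ∈ qs R e q₀ ω K :=
    qs_mem_mono H e hG0 ω (le_max_right _ _) (Ffun_pair H e hG0 ω y)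
  exact (good_qs H e hG0 ω K (x, _) h1 (y, _) h2).2

theorem Phi_mem_graphAut (H : RandHyp R) (e : ℕ ≃ V) {q₀ : List (V × V)}
    (hG0 : Good R q₀) (ω : ℕ → ℕ) : Phi R H e q₀ hG0 ω ∈ graphAut R :=
  fun x y => Phi_aut H e hG0 ω x y

theorem Phi_extends (H : RandHyp R) (e : ℕ ≃ V) {q₀ : List (V × V)} (hG0 : Good R q₀)
    (ω : ℕ → ℕ) {x y : V} (h : (x, y) ∈ q₀) : Phi R H e q₀ hG0 ω x = y :=
  pair_Ffun H e hG0 ω (k := 0) h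

end RG15
-- Part 5: topology, density, comeagerness
namespace RG15

variable {V : Type*} [TopologicalSpace V] [DiscreteTopology V] {R : V → V → Prop}

theorem continuous_coeFun :
    Continuous (fun σ : Equiv.Perm V => (⇑σ : V → V)) :=
  continuous_fst.comp (continuous_induced_dom :
    Continuous (fun σ : Equiv.Perm V => ((⇑σ, ⇑σ⁻¹) : (V → V) × (V → V))))

theorem isOpen_app_eq (v w : V) : IsOpen {p : Equiv.Perm V | p v = w} :=
  (isOpen_discrete {w}).preimage ((continuous_apply v).comp continuous_coeFun)

/-- Finite conditions form a neighbourhood basis. -/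
theorem perm_nbhd {W : Set (Equiv.Perm V)} (hW : IsOpen W) {f₀ : Equiv.Perm V}
    (hf₀ : f₀ ∈ W) :
    ∃ E₁ E₂ : Finset V, ∀ f : Equiv.Perm V,
      (∀ x ∈ E₁, f x = f₀ x) → (∀ y ∈ E₂, f⁻¹ y = f₀⁻¹ y) → f ∈ W := by
  obtain ⟨W', hW', hWeq⟩ := isOpen_induced_iff.1 hW
  have hmem : ((⇑f₀, ⇑f₀⁻¹) : (V → V) × (V → V)) ∈ W' := by
    rw [← hWeq] at hf₀; exact hf₀
  have hW'n : W' ∈ nhds ((⇑f₀, ⇑f₀⁻¹) : (V → V) × (V → V)) := hW'.mem_nhds hmem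
  rw [nhds_prod_eq, Filter.mem_prod_iff] at hW'n
  obtain ⟨U₁, hU₁, U₂, hU₂, hsub⟩ := hW'n
  rw [nhds_pi, Filter.mem_pi] at hU₁ hU₂
  obtain ⟨I₁, hI₁fin, t₁, ht₁, hsub₁⟩ := hU₁
  obtain ⟨I₂, hI₂fin, t₂, ht₂, hsub₂⟩ := hU₂
  refine ⟨hI₁fin.toFinset, hI₂fin.toFinset, fun f h1 h2 => ?_⟩
  rw [← hWeq]
  show ((⇑f, ⇑f⁻¹) : (V → V) × (V → V)) ∈ W'
  apply hsub
  constructor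
  · apply hsub₁
    rw [Set.mem_pi]
    intro i hi
    have hti : t₁ i ∈ nhds (f₀ i) := ht₁ i
    rw [nhds_discrete, Filter.mem_pure] at hti
    show f i ∈ t₁ i
    exact (h1 i (hI₁fin.mem_toFinset.2 hi)).symm ▸ hti
  · apply hsub₂
    rw [Set.mem_pi]
    intro i hi
    have hti : t₂ i ∈ nhds (f₀⁻¹ i) := ht₂ i
    rw [nhds_discrete, Filter.mem_pure] at hti
    show f⁻¹ i ∈ t₂ i
    exact (h2 i (hI₂fin.mem_toFinset.2 hi)).symm ▸ hti

theorem good_cons_fixedpoint (H : RandHyp R) {L : List (V × V)} (hG : Good R L) {z : V}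
    (hz : ∀ p ∈ L, z ≠ p.1 ∧ z ≠ p.2 ∧ ¬ R z p.1 ∧ ¬ R z p.2) :
    Good R ((z, z) :: L) := by
  intro p hp q hq
  rcases List.mem_cons.1 hp with rfl | hp <;> rcases List.mem_cons.1 hq with rfl | hq
  · exact ⟨Iff.rfl, Iff.rfl⟩
  · exact ⟨iff_of_false (hz q hq).1 (hz q hq).2.1,
      iff_of_false (hz q hq).2.2.1 (hz q hq).2.2.2⟩
  · refine ⟨iff_of_false (fun h => (hz p hp).1 h.symm) (fun h => (hz p hp).2.1 h.symm),
      iff_of_false (fun h => (hz p hp).2.2.1 (H.hsym _ _ h))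
        (fun h => (hz p hp).2.2.2 (H.hsym _ _ h))⟩
  · exact hG p hp q hq

open Classical in
/-- Key construction for density: approximate a given automorphism and
create one extra fixed point outside `S`. -/
theorem density_step (H : RandHyp R) (e : ℕ ≃ V) (f₀ : Equiv.Perm V)
    (hf₀ : f₀ ∈ graphAut R) (E₁ E₂ S : Finset V) :
    ∃ f : Equiv.Perm V, f ∈ graphAut R ∧ (∀ x ∈ E₁, f x = f₀ x) ∧
      (∀ y ∈ E₂, f⁻¹ y = f₀⁻¹ y) ∧ ∃ z, z ∉ S ∧ f z = z := by
  set D : Finset V := E₁ ∪ E₂.image ⇑f₀⁻¹ with hD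
  set L₀ : List (V × V) := D.toList.map (fun x => (x, f₀ x)) with hL₀
  have memL₀ : ∀ p : V × V, p ∈ L₀ ↔ p.1 ∈ D ∧ p.2 = f₀ p.1 := by
    intro p
    rw [hL₀, List.mem_map]
    constructor
    · rintro ⟨x, hx, rfl⟩; exact ⟨Finset.mem_toList.1 hx, rfl⟩
    · rintro ⟨h1, h2⟩
      exact ⟨p.1, Finset.mem_toList.2 h1, by rw [← h2]⟩
  have hGL₀ : Good R L₀ := by
    intro p hp q hq
    obtain ⟨hp1, hp2⟩ := (memL₀ p).1 hp
    obtain ⟨hq1, hq2⟩ := (memL₀ q).1 hq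
    rw [hp2, hq2]
    exact ⟨⟨fun h => by rw [h], fun h => f₀.injective h⟩, hf₀ p.1 q.1⟩
  set S' : Set V := (↑D ∪ (fun x => f₀ x) '' ↑D) ∪ ↑S with hS'
  have hS'fin : S'.Finite := ((D.finite_toSet.union (D.finite_toSet.image _)).union
    S.finite_toSet)
  obtain ⟨z, hzS', hz⟩ := H.fresh S' hS'fin ∅ (Set.empty_subset _)
  have hznotR : ∀ x ∈ S', ¬ R z x := by
    intro x hx hR; exact absurd ((hz x hx).1 hR) (Set.notMem_empty x)
  have hmemS' : ∀ p ∈ L₀, p.1 ∈ S' ∧ p.2 ∈ S' := by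
    intro p hp
    obtain ⟨h1, h2⟩ := (memL₀ p).1 hp
    exact ⟨Or.inl (Or.inl h1), by rw [h2]; exact Or.inl (Or.inr ⟨p.1, h1, rfl⟩)⟩
  have hGq₀ : Good R ((z, z) :: L₀) := by
    apply good_cons_fixedpoint H hGL₀
    intro p hp
    obtain ⟨h1, h2⟩ := hmemS' p hp
    exact ⟨fun h => hzS' (h ▸ h1), fun h => hzS' (h ▸ h2),
      hznotR _ h1, hznotR _ h2⟩
  refine ⟨Phi R H e _ hGq₀ (fun _ => 0), Phi_mem_graphAut H e hGq₀ _, ?_, ?_, z,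
    fun h => hzS' (Or.inr h), ?_⟩
  · intro x hx
    have hxD : x ∈ D := Finset.mem_union_left _ hx
    exact Phi_extends H e hGq₀ _ (List.mem_cons_of_mem _ ((memL₀ (x, f₀ x)).2 ⟨hxD, rfl⟩))
  · intro y hy
    have hxD : f₀⁻¹ y ∈ D := Finset.mem_union_right _ (Finset.mem_image_of_mem _ hy)
    have hfx : Phi R H e _ hGq₀ (fun _ => 0) (f₀⁻¹ y) = y := by
      have := Phi_extends H e hGq₀ (fun _ => 0)
        (List.mem_cons_of_mem _ ((memL₀ (f₀⁻¹ y, f₀ (f₀⁻¹ y))).2 ⟨hxD, rfl⟩))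
      rw [this]
      exact f₀.apply_symm_apply y
    apply (Phi R H e _ hGq₀ (fun _ => 0)).injective
    rw [Equiv.Perm.apply_inv_self, hfx]
  · exact Phi_extends H e hGq₀ _ (List.mem_cons_self)

end RG15
-- Part 6: the comeager set of automorphisms with infinitely many fixed points
namespace RG15

variable {V : Type*} [TopologicalSpace V] [DiscreteTopology V] {R : V → V → Prop}

/-- Automorphisms agreeing with `s` on an infinite set. -/
def AgreeInf (R : V → V → Prop) (s : Equiv.Perm V) : Set (graphAut R) :=
  {f | {x | (f : Equiv.Perm V) x = s x}.Infinite}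

def GS (R : V → V → Prop) (S : Finset V) : Set (graphAut R) :=
  {f | ∃ v, (f : Equiv.Perm V) v = v ∧ v ∉ S}

theorem isOpen_GS (S : Finset V) : IsOpen (GS R S) := by
  have : GS R S = Subtype.val ⁻¹'
      (⋃ (v : V) (_ : v ∉ S), {p : Equiv.Perm V | p v = v}) := by
    ext f
    simp only [GS, Set.mem_preimage, Set.mem_iUnion, Set.mem_setOf_eq]
    constructor
    · rintro ⟨v, h1, h2⟩; exact ⟨v, h2, h1⟩
    · rintro ⟨v, h2, h1⟩; exact ⟨v, h1, h2⟩
  rw [this]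
  exact (isOpen_iUnion fun v => isOpen_iUnion fun _ => isOpen_app_eq v v).preimage
    continuous_subtype_val

theorem dense_GS (H : RandHyp R) (e : ℕ ≃ V) (S : Finset V) : Dense (GS R S) := by
  rw [dense_iff_inter_open]
  intro U hU hne
  obtain ⟨f₀, hf₀U⟩ := hne
  obtain ⟨W, hW, hWeq⟩ := isOpen_induced_iff.1 hU
  have hf₀W : (f₀ : Equiv.Perm V) ∈ W := by rw [← hWeq] at hf₀U; exact hf₀U
  obtain ⟨E₁, E₂, hbox⟩ := perm_nbhd hW hf₀W
  obtain ⟨f, hfmem, h1, h2, z, hzS, hfz⟩ := density_step H e (↑f₀) f₀.2 E₁ E₂ S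
  refine ⟨⟨f, hfmem⟩, ?_, z, hfz, hzS⟩
  rw [← hWeq]
  exact hbox f h1 h2

theorem infinite_iff_GS (f : graphAut R) :
    {x | (f : Equiv.Perm V) x = x}.Infinite ↔ ∀ S : Finset V, f ∈ GS R S := by
  constructor
  · intro h S
    obtain ⟨v, hv1, hv2⟩ := h.exists_notMem_finset S
    exact ⟨v, hv1, hv2⟩
  · intro h
    intro hfin
    obtain ⟨v, hv1, hv2⟩ := h hfin.toFinset
    exact hv2 (hfin.mem_toFinset.2 hv1)

theorem comeager_fix [Countable V] (H : RandHyp R) (e : ℕ ≃ V) :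
    AgreeInf R 1 ∈ residual (graphAut R) := by
  have : AgreeInf R 1 = ⋂ S : Finset V, GS R S := by
    ext f
    simp only [AgreeInf, Set.mem_setOf_eq, Set.mem_iInter]
    have : ∀ x : V, ((f : Equiv.Perm V) x = (1 : Equiv.Perm V) x) ↔ ((f : Equiv.Perm V) x = x) := by
      intro x; simp
    rw [show {x | (f : Equiv.Perm V) x = (1 : Equiv.Perm V) x} = {x | (f : Equiv.Perm V) x = x} by ext x; simp]
    exact infinite_iff_GS f
  rw [this]
  exact countable_iInter_mem.2 fun S => residual_of_dense_open (isOpen_GS S) (dense_GS H e S)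

theorem measurableSet_AgreeInf [Countable V] (s : Equiv.Perm V) : MeasurableSet (AgreeInf R s) := by
  have : AgreeInf R s = ⋂ S : Finset V, ⋃ (v : V) (_ : v ∉ S),
      {f : graphAut R | (f : Equiv.Perm V) v = s v} := by
    ext f
    simp only [AgreeInf, Set.mem_setOf_eq, Set.mem_iInter, Set.mem_iUnion]
    constructor
    · intro h S
      obtain ⟨v, hv1, hv2⟩ := h.exists_notMem_finset S
      exact ⟨v, hv2, hv1⟩
    · intro h hfin
      obtain ⟨v, hv2, hv1⟩ := h hfin.toFinset
      exact hv2 (hfin.mem_toFinset.2 hv1)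
  rw [this]
  refine MeasurableSet.iInter fun S => MeasurableSet.iUnion fun v => MeasurableSet.iUnion fun _ => ?_
  have : {f : graphAut R | (f : Equiv.Perm V) v = s v}
      = Subtype.val ⁻¹' {p : Equiv.Perm V | p v = s v} := rfl
  rw [this]
  exact (isOpen_app_eq v (s v)).measurableSet.preimage measurable_subtype_coe

end RG15
-- Part 7: the coin-flipping space and its Haar measure
namespace RG15

open MeasureTheory

def Mk (k : ℕ) : ℕ := 2 ^ (k + 1)

instance (k : ℕ) : NeZero (Mk k) := ⟨by simp [Mk]⟩

def Fib (k : ℕ) : Type := ZMod (Mk k)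

instance (k : ℕ) : AddCommGroup (Fib k) := inferInstanceAs (AddCommGroup (ZMod (Mk k)))
instance (k : ℕ) : Fintype (Fib k) := inferInstanceAs (Fintype (ZMod (Mk k)))
instance (k : ℕ) : TopologicalSpace (Fib k) := ⊥
instance (k : ℕ) : DiscreteTopology (Fib k) := ⟨rfl⟩
instance (k : ℕ) : MeasurableSpace (Fib k) := ⊤
instance (k : ℕ) : BorelSpace (Fib k) := ⟨borel_eq_top_of_discrete.symm⟩
instance (k : ℕ) : MeasurableSingletonClass (Fib k) :=
  ⟨fun _ => MeasurableSpace.measurableSet_top⟩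
instance (k : ℕ) : IsTopologicalAddGroup (Fib k) :=
  { continuous_add := continuous_of_discreteTopology
    continuous_neg := continuous_of_discreteTopology }

theorem Fib_card (k : ℕ) : Fintype.card (Fib k) = Mk k := ZMod.card (Mk k)

abbrev Om : Type := ∀ k : ℕ, Fib k

noncomputable def coin : Measure Om :=
  Measure.addHaarMeasure (⊤ : TopologicalSpace.PositiveCompacts Om)

instance : IsProbabilityMeasure (coin) := by
  constructor
  rw [show (Set.univ : Set Om) = ↑(⊤ : TopologicalSpace.PositiveCompacts Om) from
    (TopologicalSpace.PositiveCompacts.coe_top).symm]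
  exact Measure.addHaarMeasure_self

instance : coin.IsAddLeftInvariant :=
  inferInstanceAs (Measure.addHaarMeasure (⊤ : TopologicalSpace.PositiveCompacts Om)).IsAddLeftInvariant

def restr (k : ℕ) (ω : Om) : ∀ i : Fin k, Fib i := fun i => ω i

def cyl (k : ℕ) (σ : ∀ i : Fin k, Fib i) : Set Om := {ω | ∀ i : Fin k, ω i = σ i}

theorem measurableSet_cyl (k : ℕ) (σ : ∀ i : Fin k, Fib i) : MeasurableSet (cyl k σ) := by
  have : cyl k σ = ⋂ i : Fin k, (fun ω : Om => ω i) ⁻¹' {σ i} := by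
    ext ω; simp [cyl]
  rw [this]
  exact MeasurableSet.iInter fun i =>
    (measurable_pi_apply (i : ℕ)) (MeasurableSet.singleton (σ i))

theorem mem_cyl_iff_restr {k : ℕ} {σ : ∀ i : Fin k, Fib i} {ω : Om} :
    ω ∈ cyl k σ ↔ restr k ω = σ := by
  constructor
  · intro h; funext i; exact h i
  · intro h i; exact congrFun h i

/-- The probability that coordinate `k` hits a value prescribed
by the earlier coordinates is `1 / Mk k`. -/
theorem coin_graph (k : ℕ) (g : (∀ i : Fin k, Fib i) → Fib k) :
    coin {ω : Om | ω k = g (restr k ω)} = (Mk k : ENNReal)⁻¹ := by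
  set E : Fib k → Set Om := fun c => {ω | ω k = g (restr k ω) + c} with hE
  have hEmeas : ∀ c, MeasurableSet (E c) := by
    intro c
    have : E c = ⋃ σ : ∀ i : Fin k, Fib i, (cyl k σ ∩ (fun ω : Om => ω k) ⁻¹' {g σ + c}) := by
      ext ω
      simp only [hE, Set.mem_setOf_eq, Set.mem_iUnion, Set.mem_inter_iff, Set.mem_preimage,
        Set.mem_singleton_iff]
      constructor
      · intro h; exact ⟨restr k ω, mem_cyl_iff_restr.2 rfl, h⟩
      · rintro ⟨σ, h1, h2⟩
        rw [mem_cyl_iff_restr.1 h1]; exact h2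
    rw [this]
    exact MeasurableSet.iUnion fun σ => (measurableSet_cyl k σ).inter
      ((measurable_pi_apply k) (MeasurableSet.singleton _))
  have hpre : ∀ d c : Fib k,
      (fun ω : Om => (Pi.single k d : Om) + ω) ⁻¹' (E c) = E (c - d) := by
    intro d c
    ext ω
    simp only [hE, Set.mem_preimage, Set.mem_setOf_eq, Pi.add_apply]
    have h1 : (Pi.single k d : Om) k = d := Pi.single_eq_same k d
    have h2 : restr k ((Pi.single k d : Om) + ω) = restr k ω := by
      funext i
      have h0 : (Pi.single k d : Om) (i : ℕ) = 0 :=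
        Pi.single_eq_of_ne (Nat.ne_of_lt i.2) d
      show (Pi.single k d : Om) (i : ℕ) + ω (i : ℕ) = ω (i : ℕ)
      rw [h0, zero_add]
    rw [h1, h2]
    constructor
    · intro h
      have h3 : ω k = (d + ω k) - d := by abel
      rw [h3, h]
      abel
    · intro h
      rw [h]
      abel
  have htrans : ∀ c : Fib k, coin (E c) = coin (E 0) := by
    intro c
    have hc : (0 : Fib k) - (-c) = c := by abel
    have h4 : (fun ω : Om => (Pi.single k (-c) : Om) + ω) ⁻¹' (E 0) = E c := by
      rw [hpre, hc]
    rw [← h4]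
    exact measure_preimage_add coin _ (E 0)
  have hdisj : Pairwise (Function.onFun Disjoint E) := by
    intro c c' hne
    rw [Function.onFun, Set.disjoint_left]
    intro ω h1 h2
    apply hne
    have := h1.symm.trans h2
    exact add_left_cancel this
  have hcover : (⋃ c, E c) = Set.univ := by
    ext ω
    simp only [Set.mem_iUnion, Set.mem_univ, iff_true]
    exact ⟨ω k - g (restr k ω), by simp [hE]⟩
  have hsum : ∑' c : Fib k, coin (E c) = 1 := by
    rw [← measure_iUnion hdisj hEmeas, hcover, measure_univ]
  rw [tsum_fintype] at hsum
  have hsum2 : (Mk k : ENNReal) * coin (E 0) = 1 := by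
    rw [← hsum, Finset.sum_congr rfl (fun c _ => htrans c), Finset.sum_const,
      Finset.card_univ, Fib_card]
    simp [nsmul_eq_mul]
  have hM0 : (Mk k : ENNReal) ≠ 0 := by
    simp [NeZero.ne (Mk k)]
  have hMt : (Mk k : ENNReal) ≠ ⊤ := ENNReal.natCast_ne_top _
  have hE0 : E 0 = {ω : Om | ω k = g (restr k ω)} := by
    ext ω; simp [hE]
  have h5 := congrArg (fun t => (Mk k : ENNReal)⁻¹ * t) hsum2
  simp only [mul_one] at h5
  rw [← mul_assoc, ENNReal.inv_mul_cancel hM0 hMt, one_mul] at h5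
  rw [← hE0, h5]

end RG15
-- Part 8: the random automorphism and the Borel–Cantelli estimate
namespace RG15

open MeasureTheory

variable {V : Type*} [TopologicalSpace V] [DiscreteTopology V] {R : V → V → Prop}

def fibVal (k : ℕ) (c : Fib k) : ℕ := ZMod.val (n := Mk k) c

theorem fibVal_inj (k : ℕ) : Function.Injective (fibVal k) :=
  fun _ _ h => ZMod.val_injective (Mk k) h

def omfun (ω : Om) : ℕ → ℕ := fun i => fibVal i (ω i)

theorem good_nil : Good R ([] : List (V × V)) := fun p hp => absurd hp List.not_mem_nil

noncomputable def Psi (H : RandHyp R) (e : ℕ ≃ V) (ω : Om) : Equiv.Perm V :=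
  Phi R H e [] good_nil (omfun ω)

/-- The event that the pair added at stage `k` agrees with `s`. -/
def CC (R : V → V → Prop) (e : ℕ ≃ V) (s : Equiv.Perm V) (k : ℕ) : Set Om :=
  {ω | ∃ pr : V × V, qs R e [] (omfun ω) (k + 1) = pr :: qs R e [] (omfun ω) k ∧
    pr.2 = s pr.1}

def extk (k : ℕ) (σ : ∀ i : Fin k, Fib i) : ℕ → ℕ :=
  fun i => if h : i < k then fibVal i (σ ⟨i, h⟩) else 0

theorem qs_extk_restr (e : ℕ ≃ V) (k : ℕ) (ω : Om) :
    qs R e [] (extk k (restr k ω)) k = qs R e [] (omfun ω) k := by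
  apply qs_congr
  intro i hi
  simp only [extk, restr, dif_pos hi, omfun]

theorem step_cons_agree_unique (H : RandHyp R) (e : ℕ ≃ V) {L : List (V × V)}
    (hG : Good R L) (s : Equiv.Perm V) {k c₁ c₂ : ℕ}
    (h₁ : ∃ pr : V × V, step R e k c₁ L = pr :: L ∧ pr.2 = s pr.1)
    (h₂ : ∃ pr : V × V, step R e k c₂ L = pr :: L ∧ pr.2 = s pr.1) : c₁ = c₂ := by
  obtain ⟨pr₁, e₁, a₁⟩ := h₁
  obtain ⟨pr₂, e₂, a₂⟩ := h₂
  by_cases hk : k % 2 = 0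
  · by_cases hd : e (k / 2) ∈ doms L
    · rw [step, if_pos hk, if_pos hd] at e₁
      exact absurd e₁.symm (List.cons_ne_self pr₁ L)
    · rw [step, if_pos hk, if_neg hd] at e₁ e₂
      obtain ⟨hpr₁, -⟩ := List.cons.inj e₁
      obtain ⟨hpr₂, -⟩ := List.cons.inj e₂
      apply candFun_inj H hG (e (k / 2))
      have hv₁ : candFun R L (e (k / 2)) c₁ = s (e (k / 2)) := by
        have := a₁; rw [← hpr₁] at this; exact this
      have hv₂ : candFun R L (e (k / 2)) c₂ = s (e (k / 2)) := by
        have := a₂; rw [← hpr₂] at this; exact this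
      rw [hv₁, hv₂]
  · by_cases hr : e (k / 2) ∈ rans L
    · rw [step, if_neg hk, if_pos hr] at e₁
      exact absurd e₁.symm (List.cons_ne_self pr₁ L)
    · rw [step, if_neg hk, if_neg hr] at e₁ e₂
      obtain ⟨hpr₁, -⟩ := List.cons.inj e₁
      obtain ⟨hpr₂, -⟩ := List.cons.inj e₂
      apply candFunB_inj H hG (e (k / 2))
      apply s.injective
      have hv₁ : e (k / 2) = s (candFunB R L (e (k / 2)) c₁) := by
        have := a₁; rw [← hpr₁] at this; exact this
      have hv₂ : e (k / 2) = s (candFunB R L (e (k / 2)) c₂) := by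
        have := a₂; rw [← hpr₂] at this; exact this
      rw [← hv₁, ← hv₂]

open Classical in
noncomputable def bad (H : RandHyp R) (e : ℕ ≃ V) (s : Equiv.Perm V) (k : ℕ)
    (σ : ∀ i : Fin k, Fib i) : Fib k :=
  if h : ∃ c : Fib k, ∃ pr : V × V,
      step R e k (fibVal k c) (qs R e [] (extk k σ) k) = pr :: qs R e [] (extk k σ) k ∧
        pr.2 = s pr.1
  then h.choose else 0

theorem CC_subset (H : RandHyp R) (e : ℕ ≃ V) (s : Equiv.Perm V) (k : ℕ) :
    CC R e s k ⊆ {ω : Om | ω k = bad H e s k (restr k ω)} := by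
  intro ω hω
  obtain ⟨pr, hcons, hagree⟩ := hω
  have hre := qs_extk_restr (R := R) e k ω
  have hcons' : step R e k (fibVal k (ω k)) (qs R e [] (extk k (restr k ω)) k) =
      pr :: qs R e [] (extk k (restr k ω)) k := by
    rw [hre]
    exact hcons
  have hex : ∃ c : Fib k, ∃ pr' : V × V,
      step R e k (fibVal k c) (qs R e [] (extk k (restr k ω)) k) =
        pr' :: qs R e [] (extk k (restr k ω)) k ∧ pr'.2 = s pr'.1 :=
    ⟨ω k, pr, hcons', hagree⟩
  show ω k = bad H e s k (restr k ω)
  rw [bad, dif_pos hex]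
  obtain ⟨pr', hc', ha'⟩ := hex.choose_spec
  apply fibVal_inj k
  exact step_cons_agree_unique H e (good_qs H e good_nil _ k) s
    ⟨pr, hcons', hagree⟩ ⟨pr', hc', ha'⟩

theorem coin_CC_le (H : RandHyp R) (e : ℕ ≃ V) (s : Equiv.Perm V) (k : ℕ) :
    coin (CC R e s k) ≤ (Mk k : ENNReal)⁻¹ :=
  le_trans (measure_mono (CC_subset H e s k)) (le_of_eq (coin_graph k (bad H e s k)))

theorem tsum_CC_ne_top (H : RandHyp R) (e : ℕ ≃ V) (s : Equiv.Perm V) :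
    (∑' k, coin (CC R e s k)) ≠ ⊤ := by
  have h1 : ∀ k : ℕ, coin (CC R e s k) ≤ (2⁻¹ : ENNReal) ^ k := by
    intro k
    refine le_trans (coin_CC_le H e s k) ?_
    have : (Mk k : ENNReal) = 2 ^ (k + 1) := by
      rw [Mk]; push_cast; ring
    rw [this, ← ENNReal.inv_pow, pow_succ]
    exact ENNReal.inv_le_inv.2 (le_mul_of_one_le_right' one_le_two)
  refine ne_top_of_le_ne_top ?_ (ENNReal.tsum_le_tsum h1)
  rw [ENNReal.tsum_geometric]
  simp [ENNReal.sub_half]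

/-- On the event of infinite agreement with `s`, infinitely many stages agree. -/
theorem agree_subset_limsup (H : RandHyp R) (e : ℕ ≃ V) (s : Equiv.Perm V) :
    {ω : Om | {x : V | Psi H e ω x = s x}.Infinite} ⊆
      Filter.limsup (CC R e s) Filter.atTop := by
  intro ω hω
  -- first: for each agreeing x there is an agreeing stage with the freshness property
  have key : ∀ x : V, Psi H e ω x = s x →
      ∃ k, ω ∈ CC R e s k ∧ x ∉ doms (qs R e [] (omfun ω) k) ∧
        x ∈ doms (qs R e [] (omfun ω) (k + 1)) := by
    intro x hx
    have hex : ∃ j, x ∈ doms (qs R e [] (omfun ω) (j + 1)) :=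
      ⟨2 * e.symm x, by
        have := cover_dom (R := R) e ([] : List (V × V)) (omfun ω) x
        exact this⟩
    classical
    obtain ⟨k, hk1, hkmin⟩ : ∃ k, x ∈ doms (qs R e [] (omfun ω) (k + 1)) ∧
        ∀ m, m < k → x ∉ doms (qs R e [] (omfun ω) (m + 1)) :=
      ⟨Nat.find hex, Nat.find_spec hex, fun m hm => Nat.find_min hex hm⟩
    have hk0 : x ∉ doms (qs R e [] (omfun ω) k) := by
      cases k with
      | zero =>
        rintro ⟨p, hp, -⟩
        exact absurd hp List.not_mem_nil
      | succ j => exact hkmin j (Nat.lt_succ_self j)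
    rcases step_cases H e k (omfun ω k) (good_qs H e good_nil (omfun ω) k) with hs | ⟨pr, hs, hd, hrr, hgg⟩
    · exfalso
      apply hk0
      have : qs R e [] (omfun ω) (k+1) = qs R e [] (omfun ω) k := hs
      rwa [this] at hk1
    · have hqs : qs R e [] (omfun ω) (k+1) = pr :: qs R e [] (omfun ω) k := hs
      have hprx : pr.1 = x := by
        obtain ⟨p, hp, hpx⟩ := hk1
        rw [hqs] at hp
        rcases List.mem_cons.1 hp with rfl | hp'
        · exact hpx
        · exact absurd ⟨p, hp', hpx⟩ hk0
      have hpair : (x, pr.2) ∈ qs R e [] (omfun ω) (k+1) := by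
        rw [hqs, ← hprx]
        exact List.mem_cons_self
      have hval : Psi H e ω x = pr.2 := pair_Ffun H e good_nil (omfun ω) hpair
      refine ⟨k, ⟨pr, hqs, ?_⟩, hk0, hk1⟩
      rw [hprx, ← hval, hx]
  -- stages are distinct for distinct x
  have hKinf : {k : ℕ | ω ∈ CC R e s k ∧ ∃ x : V, Psi H e ω x = s x ∧
      x ∉ doms (qs R e [] (omfun ω) k) ∧ x ∈ doms (qs R e [] (omfun ω) (k + 1))}.Infinite := by
    classical
    set Agr := {x : V | Psi H e ω x = s x} with hAgr
    haveI : Infinite ↥Agr := hω.to_subtype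
    choose F hF1 hF2 hF3 using fun x : ↥Agr => key x.1 x.2
    have hFmem : ∀ x : ↥Agr, F x ∈ {k : ℕ | ω ∈ CC R e s k ∧ ∃ y : V,
        Psi H e ω y = s y ∧ y ∉ doms (qs R e [] (omfun ω) k) ∧
        y ∈ doms (qs R e [] (omfun ω) (k + 1))} := by
      intro x
      exact ⟨hF1 x, x.1, x.2, hF2 x, hF3 x⟩
    have hFinj : Function.Injective F := by
      intro x y hxy
      have hx2 := hF2 x
      have hx3 := hF3 x
      have hy2 := hF2 y
      have hy3 := hF3 y
      rw [hxy] at hx2 hx3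
      -- both x and y are the fresh domain point added at stage F y
      rcases step_cases H e (F y) (omfun ω (F y)) (good_qs H e good_nil (omfun ω) (F y))
        with hs | ⟨pr, hs, -⟩
      · exfalso
        apply hx2
        have : qs R e [] (omfun ω) (F y + 1) = qs R e [] (omfun ω) (F y) := hs
        rwa [this] at hx3
      · have hqs : qs R e [] (omfun ω) (F y + 1) = pr :: qs R e [] (omfun ω) (F y) := hs
        have hxx : pr.1 = x.1 := by
          obtain ⟨p, hp, hpx⟩ := hx3
          rw [hqs] at hp
          rcases List.mem_cons.1 hp with rfl | hp'
          · exact hpx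
          · exact absurd ⟨p, hp', hpx⟩ hx2
        have hyy : pr.1 = y.1 := by
          obtain ⟨p, hp, hpy⟩ := hy3
          rw [hqs] at hp
          rcases List.mem_cons.1 hp with rfl | hp'
          · exact hpy
          · exact absurd ⟨p, hp', hpy⟩ hy2
        exact Subtype.ext (hxx ▸ hyy)
    exact Set.infinite_of_injective_forall_mem hFinj hFmem
  have hKinf' : {k : ℕ | ω ∈ CC R e s k}.Infinite :=
    hKinf.mono (fun k hk => hk.1)
  rw [Filter.limsup_eq_iInf_iSup_of_nat]
  show ω ∈ ⋂ n : ℕ, ⨆ i ≥ n, CC R e s i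
  refine Set.mem_iInter.2 fun m => ?_
  have : ∃ k, m ≤ k ∧ ω ∈ CC R e s k := by
    by_contra hcon
    push_neg at hcon
    apply hKinf'
    apply Set.Finite.subset (Set.finite_lt_nat m)
    intro k hk
    by_contra hmk
    simp only [Set.mem_setOf_eq, not_lt] at hmk
    exact hcon k hmk hk
  obtain ⟨k, hk1, hk2⟩ := this
  show ω ∈ ⋃ i, ⋃ (_ : i ≥ m), CC R e s i
  exact Set.mem_iUnion.2 ⟨k, Set.mem_iUnion.2 ⟨hk1, hk2⟩⟩

theorem coin_agree_zero (H : RandHyp R) (e : ℕ ≃ V) (s : Equiv.Perm V) :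
    coin {ω : Om | {x : V | Psi H e ω x = s x}.Infinite} = 0 :=
  measure_mono_null (agree_subset_limsup H e s)
    (measure_limsup_atTop_eq_zero (tsum_CC_ne_top H e s))

end RG15
-- Part 9: measurability of the random automorphism, and translation lemmas
namespace RG15

open MeasureTheory

variable {V : Type*} [TopologicalSpace V] [DiscreteTopology V] {R : V → V → Prop}

theorem continuous_PsiCoe (H : RandHyp R) (e : ℕ ≃ V) :
    Continuous fun ω : Om => (⇑(Psi H e ω) : V → V) := by
  apply continuous_pi
  intro x
  have heq : (fun ω : Om => Psi H e ω x) =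
      (fun σ : ∀ i : Fin (2 * e.symm x + 1), Fib i =>
        papp (qs R e [] (extk (2 * e.symm x + 1) σ) (2 * e.symm x + 1)) x) ∘
        (restr (2 * e.symm x + 1)) := by
    funext ω
    show Ffun R e [] (omfun ω) x = _
    rw [Ffun]
    show _ = papp (qs R e [] (extk _ (restr (2 * e.symm x + 1) ω)) (2 * e.symm x + 1)) x
    rw [qs_extk_restr]
  show Continuous fun ω : Om => Psi H e ω x
  rw [heq]
  exact continuous_of_discreteTopology.comp (continuous_pi fun i => continuous_apply (i : ℕ))

theorem continuous_PsiInvCoe (H : RandHyp R) (e : ℕ ≃ V) :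
    Continuous fun ω : Om => (⇑(Psi H e ω)⁻¹ : V → V) := by
  apply continuous_pi
  intro x
  have hval : ∀ ω : Om, (Psi H e ω)⁻¹ x = Gfun R e [] (omfun ω) x := fun ω => rfl
  have heq : (fun ω : Om => (Psi H e ω)⁻¹ x) =
      (fun σ : ∀ i : Fin (2 * e.symm x + 2), Fib i =>
        ppre (qs R e [] (extk (2 * e.symm x + 2) σ) (2 * e.symm x + 2)) x) ∘
        (restr (2 * e.symm x + 2)) := by
    funext ω
    rw [hval ω]
    show Gfun R e [] (omfun ω) x = _
    rw [Gfun]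
    show _ = ppre (qs R e [] (extk _ (restr (2 * e.symm x + 2) ω)) (2 * e.symm x + 2)) x
    rw [qs_extk_restr]
  show Continuous fun ω : Om => (Psi H e ω)⁻¹ x
  rw [heq]
  exact continuous_of_discreteTopology.comp (continuous_pi fun i => continuous_apply (i : ℕ))

theorem continuous_Psi (H : RandHyp R) (e : ℕ ≃ V) : Continuous (Psi H e) := by
  apply continuous_induced_rng.2
  exact (continuous_PsiCoe H e).prodMk (continuous_PsiInvCoe H e)

theorem measurable_Psi (H : RandHyp R) (e : ℕ ≃ V) : Measurable (Psi H e) :=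
  (continuous_Psi H e).measurable

noncomputable def Psi' (H : RandHyp R) (e : ℕ ≃ V) : Om → (graphAut R) :=
  fun ω => ⟨Psi H e ω, Phi_mem_graphAut H e good_nil (omfun ω)⟩

theorem measurable_Psi' (H : RandHyp R) (e : ℕ ≃ V) : Measurable (Psi' H e) :=
  (measurable_Psi H e).subtype_mk

theorem conj_image (g h : (graphAut R)) (B : Set (graphAut R)) :
    (fun b => g * b * h) '' B = {f | g⁻¹ * f * h⁻¹ ∈ B} := by
  ext f
  constructor
  · rintro ⟨b, hb, rfl⟩
    have hgb : g⁻¹ * (g * b * h) * h⁻¹ = b := by group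
    rw [Set.mem_setOf_eq, hgb]
    exact hb
  · intro hf
    exact ⟨g⁻¹ * f * h⁻¹, hf, by group⟩

theorem translate_subset_agree (g h : (graphAut R)) :
    {f : (graphAut R) | g⁻¹ * f * h⁻¹ ∈ AgreeInf R 1} ⊆
      AgreeInf R ((g : Equiv.Perm V) * (h : Equiv.Perm V)) := by
  intro f hf
  have hf' : {x : V | ((g : Equiv.Perm V)⁻¹ * (f : Equiv.Perm V) * (h : Equiv.Perm V)⁻¹) x
      = x}.Infinite := by
    have : ((g⁻¹ * f * h⁻¹ : (graphAut R)) : Equiv.Perm V)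
        = (g : Equiv.Perm V)⁻¹ * (f : Equiv.Perm V) * (h : Equiv.Perm V)⁻¹ := rfl
    have h2 := hf
    simp only [AgreeInf, Set.mem_setOf_eq] at h2
    rw [this] at h2
    simpa using h2
  show {u : V | (f : Equiv.Perm V) u = ((g : Equiv.Perm V) * (h : Equiv.Perm V)) u}.Infinite
  have himg := hf'.image (Equiv.injective ((h : Equiv.Perm V)⁻¹)).injOn
  apply himg.mono
  rintro u ⟨x, hx, rfl⟩
  simp only [Set.mem_setOf_eq] at hx ⊢
  have hx' : (g : Equiv.Perm V)⁻¹ ((f : Equiv.Perm V) ((h : Equiv.Perm V)⁻¹ x)) = x := hx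
  have := congrArg (⇑(g : Equiv.Perm V)) hx'
  rw [Equiv.Perm.apply_inv_self] at this
  rw [Equiv.Perm.mul_apply, Equiv.Perm.apply_inv_self]
  exact this

theorem conj_mem_agree (g b : (graphAut R)) (hb : b ∈ AgreeInf R 1) :
    g * b * g⁻¹ ∈ AgreeInf R 1 := by
  simp only [AgreeInf, Set.mem_setOf_eq] at hb ⊢
  have himg := (by simpa using hb : {x : V | (b : Equiv.Perm V) x = x}.Infinite).image
    (Equiv.injective (g : Equiv.Perm V)).injOn
  have hsub : (⇑(g : Equiv.Perm V)) '' {x : V | (b : Equiv.Perm V) x = x} ⊆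
      {x : V | ((g * b * g⁻¹ : (graphAut R)) : Equiv.Perm V) x = (1 : Equiv.Perm V) x} := by
    rintro u ⟨x, hx, rfl⟩
    simp only [Set.mem_setOf_eq] at hx ⊢
    have hco : ((g * b * g⁻¹ : (graphAut R)) : Equiv.Perm V)
        = (g : Equiv.Perm V) * (b : Equiv.Perm V) * (g : Equiv.Perm V)⁻¹ := rfl
    rw [hco]
    simp only [Equiv.Perm.mul_apply, Equiv.Perm.one_apply]
    rw [Equiv.Perm.inv_apply_self, hx]
  exact (himg.mono hsub)

theorem conj_invariant_agree (g : (graphAut R)) :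
    (fun x => g * x * g⁻¹) '' (AgreeInf R 1) = AgreeInf R 1 := by
  ext f
  constructor
  · rintro ⟨b, hb, rfl⟩
    exact conj_mem_agree g b hb
  · intro hf
    refine ⟨g⁻¹ * f * g, ?_, by group⟩
    have := conj_mem_agree g⁻¹ f hf
    simpa using this

end RG15

/-- The automorphism group of the random graph can be decomposed into the union of a
conjugacy-invariant Haar null set and a meager set. -/
theorem stmt_15 {V : Type*} [Countable V] [Infinite V]
    [TopologicalSpace V] [DiscreteTopology V] (R : V → V → Prop)
    (hsym : ∀ x y, R x y → R y x) (hirr : ∀ x, ¬ R x x)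
    (hrand : ∀ A B : Set V, A.Finite → B.Finite → Disjoint A B →
      ∃ v : V, (∀ x ∈ A, R v x) ∧ (∀ y ∈ B, ¬ R v y)) :
    ∃ H M : Set (graphAut R), H ∪ M = Set.univ ∧ HaarNull H ∧
      (∀ g : graphAut R, (fun x => g * x * g⁻¹) '' H = H) ∧ IsMeagre M := by
    classical
  obtain ⟨e⟩ : Nonempty (ℕ ≃ V) := nonempty_equiv_of_countable
  have H : RG15.RandHyp R := ⟨hsym, hirr, hrand⟩
  refine ⟨RG15.AgreeInf R 1, (RG15.AgreeInf R 1)ᶜ, Set.union_compl_self _, ?_, ?_, ?_⟩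
  · -- Haar null
    refine ⟨RG15.AgreeInf R 1, subset_rfl, RG15.measurableSet_AgreeInf 1,
      (RG15.coin).map (RG15.Psi' H e),
      MeasureTheory.Measure.isProbabilityMeasure_map (RG15.measurable_Psi' H e).aemeasurable,
      ?_⟩
    intro g h
    rw [RG15.conj_image]
    refine measure_mono_null (RG15.translate_subset_agree g h) ?_
    rw [MeasureTheory.Measure.map_apply (RG15.measurable_Psi' H e)
      (RG15.measurableSet_AgreeInf _)]
    have hpre : (RG15.Psi' H e) ⁻¹' (RG15.AgreeInf R ((g : Equiv.Perm V) * (h : Equiv.Perm V)))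
        = {ω : RG15.Om | {x : V | RG15.Psi H e ω x
            = ((g : Equiv.Perm V) * (h : Equiv.Perm V)) x}.Infinite} := rfl
    rw [hpre]
    exact RG15.coin_agree_zero H e _
  · intro g
    exact RG15.conj_invariant_agree g
  · show ((RG15.AgreeInf R 1)ᶜ)ᶜ ∈ residual _
    rw [compl_compl]
    exact RG15.comeager_fix H e
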